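/- Let n ≥ 1, p = 2n+1 an odd prime, and let ω ∈ ℂ be a root of θ_n. With X = [[-1,1],[0,1]], Y = [[-1,0],[ω,1]] over ℂ and (XY)^k = [[a_k, b_k],[c_k, d_k]], one has (XY)^p = I, and: (1) a_k = a_{2n−k} for all 0 ≤ k ≤ 2n, and a_{2n+1} = a_0; (2) b_k = −b_{p−k} for all 0 ≤ k ≤ 2n, and b_p = 0. -/

import Mathlib

open Finset

/-- The coefficient `c_k^{(n)} = C(n+k,2k) + 2·C(n+k,2k+1)` of `θ_n`. -/
def thetaCoeff (n k : ℕ) : ℤ := ((n + k).choose (2 * k) : ℤ) + 2 * ((n + k).choose (2 * k + 1) : ℤ)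

/-- The matrix `X = [[-1,1],[0,1]]` over `ℂ`. -/
noncomputable def Xmat : Matrix (Fin 2) (Fin 2) ℂ := !![-1, 1; 0, 1]

/-- The matrix `Y = [[-1,0],[ω,1]]` over `ℂ`. -/
noncomputable def Ymat (ω : ℂ) : Matrix (Fin 2) (Fin 2) ℂ := !![-1, 0; ω, 1]

/-- `a_k`: the (1,1)-entry of `(XY)^k`. -/
noncomputable def aEnt (ω : ℂ) (k : ℕ) : ℂ := ((Xmat * Ymat ω) ^ k) 0 0

/-- `b_k`: the (1,2)-entry of `(XY)^k`. -/
noncomputable def bEnt (ω : ℂ) (k : ℕ) : ℂ := ((Xmat * Ymat ω) ^ k) 0 1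

/-! ### Auxiliary development -/

/-- The Chebyshev-like sequence `u_0 = 0`, `u_1 = 1`, `u_{k+2} = (ω+2)u_{k+1} - u_k`. -/
noncomputable def useq (ω : ℂ) : ℕ → ℂ
  | 0 => 0
  | 1 => 1
  | (k+2) => (ω+2) * useq ω (k+1) - useq ω k

lemma useq_add2 (ω : ℂ) (k : ℕ) : useq ω (k+2) = (ω+2) * useq ω (k+1) - useq ω k := rfl

lemma M_eq (ω : ℂ) : Xmat * Ymat ω = !![1+ω, 1; ω, 1] := by
  rw [Xmat, Ymat, Matrix.mul_fin_two]
  norm_num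

lemma powM (ω : ℂ) (k : ℕ) : (Xmat * Ymat ω)^k =
    !![useq ω (k+1) - useq ω k, useq ω k;
       ω * useq ω k, useq ω (k+1) - (1+ω) * useq ω k] := by
  induction k with
  | zero => simp [useq, Matrix.one_fin_two]
  | succ k ih =>
    rw [pow_succ, ih, M_eq, Matrix.mul_fin_two, useq_add2]
    ext i j
    fin_cases i <;> fin_cases j <;> simp <;> ring

lemma aEnt_eq (ω : ℂ) (k : ℕ) : aEnt ω k = useq ω (k+1) - useq ω k := by
  rw [aEnt, powM]; simp

lemma bEnt_eq (ω : ℂ) (k : ℕ) : bEnt ω k = useq ω k := by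
  rw [bEnt, powM]; simp

lemma thetaCoeff_zero {m k : ℕ} (h : m < k) : thetaCoeff m k = 0 := by
  unfold thetaCoeff
  rw [Nat.choose_eq_zero_of_lt (by omega), Nat.choose_eq_zero_of_lt (by omega)]
  simp

lemma sum_ext (ω : ℂ) (m N : ℕ) (h : m + 1 ≤ N) :
    ∑ k ∈ range N, (thetaCoeff m k : ℂ) * ω^k
    = ∑ k ∈ range (m+1), (thetaCoeff m k : ℂ) * ω^k := by
  rw [Finset.sum_subset (Finset.range_subset_range.2 h)]
  intro x hx hnx
  rw [thetaCoeff_zero (by simp at hx hnx ⊢; omega)]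
  simp

lemma pascal2 (a b : ℕ) : (a+2).choose (b+2) = a.choose (b+2) + 2 * a.choose (b+1) + a.choose b := by
  simp [Nat.choose_succ_succ]; ring

lemma keyIdNat (a j : ℕ) :
    ((a+2).choose (2*j+2) + 2*(a+2).choose (2*j+3)) + (a.choose (2*j+2) + 2*a.choose (2*j+3))
    = 2*((a+1).choose (2*j+2) + 2*(a+1).choose (2*j+3)) + (a.choose (2*j) + 2*a.choose (2*j+1)) := by
  have h1 := pascal2 a (2*j)
  have h2 : (a+2).choose (2*j+3) = a.choose (2*j+3) + 2*a.choose (2*j+2) + a.choose (2*j+1) := by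
    rw [show 2*j+3 = 2*j+1+2 by omega]; exact pascal2 a (2*j+1)
  have h3 : (a+1).choose (2*j+2) = a.choose (2*j+1) + a.choose (2*j+2) := by
    rw [show 2*j+2 = 2*j+1+1 by omega]; exact Nat.choose_succ_succ a (2*j+1)
  have h4 : (a+1).choose (2*j+3) = a.choose (2*j+2) + a.choose (2*j+3) := by
    rw [show 2*j+3 = 2*j+2+1 by omega]; exact Nat.choose_succ_succ a (2*j+2)
  rw [h1, h2, h3, h4]; ring

lemma keyId (m j : ℕ) :
    thetaCoeff (m+2) (j+1) + thetaCoeff m (j+1)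
    = 2 * thetaCoeff (m+1) (j+1) + thetaCoeff (m+1) j := by
  have h := keyIdNat (m+1+j) j
  unfold thetaCoeff
  have e1 : m+2+(j+1) = m+1+j+2 := by ring
  have e2 : m+(j+1) = m+1+j := by ring
  have e3 : m+1+(j+1) = m+1+j+1 := by ring
  have e4 : 2*(j+1) = 2*j+2 := by ring
  have e5 : 2*j+2+1 = 2*j+3 := by omega
  rw [e1, e2, e3, e4, e5]
  push_cast at h ⊢
  linarith

lemma keyId0 (m : ℕ) : thetaCoeff (m+2) 0 + thetaCoeff m 0 = 2 * thetaCoeff (m+1) 0 := by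
  unfold thetaCoeff
  simp [Nat.choose_one_right]
  push_cast; ring

lemma sum_step (ω : ℂ) (m : ℕ) :
    ∑ k ∈ range (m+3), (thetaCoeff (m+2) k : ℂ) * ω^k
    = (ω+2) * ∑ k ∈ range (m+2), (thetaCoeff (m+1) k : ℂ) * ω^k
      - ∑ k ∈ range (m+1), (thetaCoeff m k : ℂ) * ω^k := by
  rw [← sum_ext ω (m+1) (m+4) (by omega), ← sum_ext ω m (m+4) (by omega),
      ← sum_ext ω (m+2) (m+4) (by omega)]
  have key : ∑ k ∈ range (m+4), ((thetaCoeff (m+2) k : ℂ) * ω^k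
        + (thetaCoeff m k : ℂ) * ω^k - 2 * ((thetaCoeff (m+1) k : ℂ) * ω^k))
      = ω * ∑ k ∈ range (m+4), (thetaCoeff (m+1) k : ℂ) * ω^k := by
    rw [Finset.sum_range_succ' (fun k => (thetaCoeff (m+2) k : ℂ) * ω^k
        + (thetaCoeff m k : ℂ) * ω^k - 2 * ((thetaCoeff (m+1) k : ℂ) * ω^k)) (m+3)]
    have h0 : (thetaCoeff (m+2) 0 : ℂ) * ω^0 + (thetaCoeff m 0 : ℂ) * ω^0
        - 2 * ((thetaCoeff (m+1) 0 : ℂ) * ω^0) = 0 := by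
      have h := keyId0 m
      have h2 : (thetaCoeff (m+2) 0 : ℂ) + (thetaCoeff m 0 : ℂ) = 2 * (thetaCoeff (m+1) 0 : ℂ) := by
        exact_mod_cast congrArg (fun z : ℤ => (z : ℂ)) h
      simp only [pow_zero, mul_one]
      linear_combination h2
    rw [h0, add_zero]
    rw [sum_ext ω (m+1) (m+4) (by omega), ← sum_ext ω (m+1) (m+3) (by omega)]
    rw [Finset.mul_sum]
    apply Finset.sum_congr rfl
    intro j _
    have h := keyId m j
    have h2 : (thetaCoeff (m+2) (j+1) : ℂ) + (thetaCoeff m (j+1) : ℂ)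
        = 2 * (thetaCoeff (m+1) (j+1) : ℂ) + (thetaCoeff (m+1) j : ℂ) := by
      exact_mod_cast congrArg (fun z : ℤ => (z : ℂ)) h
    push_cast
    linear_combination ω^(j+1) * h2
  rw [Finset.sum_sub_distrib, Finset.sum_add_distrib] at key
  rw [← Finset.mul_sum] at key
  linear_combination key

lemma theta_sum_eq (ω : ℂ) : ∀ m, ∑ k ∈ range (m+1), (thetaCoeff m k : ℂ) * ω^k
    = useq ω (m+1) + useq ω m := by
  have base0 : ∑ k ∈ range 1, (thetaCoeff 0 k : ℂ) * ω^k = useq ω 1 + useq ω 0 := by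
    simp [thetaCoeff, useq]
  have base1 : ∑ k ∈ range 2, (thetaCoeff 1 k : ℂ) * ω^k = useq ω 2 + useq ω 1 := by
    rw [Finset.sum_range_succ, Finset.sum_range_one, useq_add2]
    simp [thetaCoeff, useq]
    ring
  have main : ∀ m, (∑ k ∈ range (m+1), (thetaCoeff m k : ℂ) * ω^k = useq ω (m+1) + useq ω m)
      ∧ (∑ k ∈ range (m+2), (thetaCoeff (m+1) k : ℂ) * ω^k = useq ω (m+2) + useq ω (m+1)) := by
    intro m
    induction m with
    | zero => exact ⟨base0, base1⟩
    | succ m ih =>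
      refine ⟨ih.2, ?_⟩
      rw [sum_step ω m, ih.1, ih.2, useq_add2 ω (m+1), useq_add2 ω m]
      ring
  exact fun m => (main m).1

lemma sym_aux (ω : ℂ) (n : ℕ) (hn : 1 ≤ n) (h : useq ω (n+1) + useq ω n = 0) :
    ∀ j, (j ≤ n → useq ω (n+1+j) + useq ω (n-j) = 0)
      ∧ (j+1 ≤ n → useq ω (n+1+(j+1)) + useq ω (n-(j+1)) = 0) := by
  intro j
  induction j with
  | zero =>
    constructor
    · intro _; simpa using h
    · intro h1
      have hr : useq ω (n+1) = (ω+2) * useq ω n - useq ω (n-1) := by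
        rw [show n+1 = (n-1)+2 by omega, useq_add2, show (n-1)+1 = n by omega]
      have hr2 : useq ω (n+2) = (ω+2) * useq ω (n+1) - useq ω n := useq_add2 ω n
      have : useq ω (n+1+1) + useq ω (n-1) = 0 := by
        rw [show n+1+1 = n+2 by omega, hr2]
        have : useq ω (n-1) = (ω+2) * useq ω n - useq ω (n+1) := by linear_combination hr
        rw [this]
        linear_combination (ω+1) * h
      simpa using this
  | succ j ih =>
    refine ⟨ih.2, ?_⟩
    intro hj
    have h1 := ih.1 (by omega)
    have h2 := ih.2 (by omega)
    have hr2 : useq ω (n+1+(j+2)) = (ω+2) * useq ω (n+1+(j+1)) - useq ω (n+1+j) := by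
      rw [show n+1+(j+2) = (n+1+j)+2 by omega, useq_add2,
        show (n+1+j)+1 = n+1+(j+1) by omega]
    have e : n - j = (n-(j+2))+2 := by omega
    have e2 : (n-(j+2))+1 = n-(j+1) := by omega
    have hr : useq ω (n-j) = (ω+2) * useq ω (n-(j+1)) - useq ω (n-(j+2)) := by
      rw [e, useq_add2, e2]
    have hthis : useq ω (n-(j+2)) = (ω+2) * useq ω (n-(j+1)) - useq ω (n-j) := by
      linear_combination hr
    rw [show j+1+1 = j+2 by omega, hr2, hthis]
    linear_combination (ω+2) * h2 - h1

lemma sym_all (ω : ℂ) (n : ℕ) (hn : 1 ≤ n) (h : useq ω (n+1) + useq ω n = 0) :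
    ∀ k ≤ 2*n+1, useq ω (2*n+1-k) = - useq ω k := by
  intro k hk
  rcases le_or_gt k n with hkn | hkn
  · have := (sym_aux ω n hn h (n-k)).1 (by omega)
    rw [show n+1+(n-k) = 2*n+1-k by omega, show n-(n-k) = k by omega] at this
    linear_combination this
  · have := (sym_aux ω n hn h (k-(n+1))).1 (by omega)
    rw [show n+1+(k-(n+1)) = k by omega, show n-(k-(n+1)) = 2*n+1-k by omega] at this
    linear_combination this

theorem stmt_2 (n : ℕ) (hn : 1 ≤ n) (hp : Nat.Prime (2 * n + 1)) (ω : ℂ)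
    (hω : ∑ k ∈ Finset.range (n + 1), (thetaCoeff n k : ℂ) * ω ^ k = 0) :
    (Xmat * Ymat ω) ^ (2 * n + 1) = 1 ∧
    (∀ k ≤ 2 * n, aEnt ω k = aEnt ω (2 * n - k)) ∧
    aEnt ω (2 * n + 1) = aEnt ω 0 ∧
    (∀ k ≤ 2 * n, bEnt ω k = - bEnt ω (2 * n + 1 - k)) ∧
    bEnt ω (2 * n + 1) = 0 := by
  have h : useq ω (n+1) + useq ω n = 0 := by
    rw [← theta_sum_eq ω n]; exact hω
  have hs := sym_all ω n hn h
  have hu0 : useq ω 0 = 0 := rfl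
  have hu1 : useq ω 1 = 1 := rfl
  have hp1 : useq ω (2*n+1) = 0 := by
    have := hs 0 (by omega)
    rw [show 2*n+1-0 = 2*n+1 by omega, hu0] at this
    simpa using this
  have hp0 : useq ω (2*n) = -1 := by
    have := hs 1 (by omega)
    rw [show 2*n+1-1 = 2*n by omega, hu1] at this
    exact this
  have hp2 : useq ω (2*n+2) = 1 := by
    rw [show 2*n+2 = 2*n+2 from rfl, useq_add2 ω (2*n), hp1, hp0]
    ring
  refine ⟨?_, ?_, ?_, ?_, ?_⟩
  · rw [powM, show 2*n+1+1 = 2*n+2 by omega, hp2, hp1, Matrix.one_fin_two]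
    norm_num
  · intro k hk
    rw [aEnt_eq, aEnt_eq]
    have hA : useq ω (2*n-k+1) = - useq ω k := by
      rw [show 2*n-k+1 = 2*n+1-k by omega]; exact hs k (by omega)
    have hB : useq ω (2*n-k) = - useq ω (k+1) := by
      rw [show 2*n-k = 2*n+1-(k+1) by omega]; exact hs (k+1) (by omega)
    rw [hA, hB]; ring
  · rw [aEnt_eq, aEnt_eq, show 2*n+1+1 = 2*n+2 by omega, hp2, hp1, hu1, hu0]
  · intro k hk
    rw [bEnt_eq, bEnt_eq]
    have := hs k (by omega)
    linear_combination this
  · rw [bEnt_eq]; exact hp1
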